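/- Let c ∈ (0,1). There exists ε₀ = ε₀(c) ∈ (0,1), depending only on c, such that for every compact metric space (X,d), every compact subset E ⊆ X and every 0 < ε ≤ ε₀, there exists a Borel probability measure μ on E satisfying μ(E') ≤ (diam_d E')^{c · dim_H(E,d,ε)} for all subsets E' ⊆ E with diam_d(E') < ε/6. -/

import Mathlib

open Filter Set Topology
open scoped ENNReal NNReal

namespace MeanDim8

/-- The `s`-dimensional Hausdorff pre-measure of `E ⊆ X` at scale `δ`
(countable covers; conventions `0^0 = 1` for nonempty sets, `diam(∅)^s = 0`). -/
noncomputable def hMeasure {X : Type*} [MetricSpace X] (E : Set X) (s δ : ℝ) : ℝ≥0∞ :=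
  open scoped Classical in
  ⨅ (C : ℕ → Set X) (_ : E ⊆ ⋃ i, C i) (_ : ∀ i, Metric.diam (C i) < δ),
    ∑' i, if (C i).Nonempty then ENNReal.ofReal (Metric.diam (C i) ^ s) else 0

/-- `dim_H(E,d,δ) = sup { s ≥ 0 : H_δ^s(E,d) ≥ 1 }`. -/
noncomputable def dimHScale {X : Type*} [MetricSpace X] (E : Set X) (δ : ℝ) : ℝ≥0∞ :=
  ⨆ (s : ℝ) (_ : 0 ≤ s) (_ : 1 ≤ hMeasure E s δ), ENNReal.ofReal s

open Metric
set_option linter.unusedSectionVars false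

section Combinatorial

variable {X : Type} [MetricSpace X] [CompactSpace X]

/-- every subset of a compact metric space is bounded -/
lemma bdd_all (A : Set X) : Bornology.IsBounded A := Metric.isBounded_of_compactSpace

lemma multiset_exists_max {α : Type*} (f : α → ℝ) (s : Multiset α) (h : s ≠ 0) :
    ∃ a ∈ s, ∀ b ∈ s, f b ≤ f a := by
  induction s using Multiset.induction_on with
  | empty => exact absurd rfl h
  | cons a t ih =>
    rcases eq_or_ne t 0 with rfl | ht
    · exact ⟨a, Multiset.mem_cons_self _ _, by simp⟩
    · obtain ⟨b, hb, hmax⟩ := ih ht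
      rcases le_total (f a) (f b) with hab | hab
      · refine ⟨b, Multiset.mem_cons_of_mem hb, ?_⟩
        intro x hx
        rcases Multiset.mem_cons.mp hx with rfl | hx
        · exact hab
        · exact hmax x hx
      · refine ⟨a, Multiset.mem_cons_self _ _, ?_⟩
        intro x hx
        rcases Multiset.mem_cons.mp hx with rfl | hx
        · exact le_rfl
        · exact (hmax x hx).trans hab

open scoped Classical in
lemma list_countP_le_one_of_pairwise {l : List (Set X)} (hl : l.Pairwise Disjoint) (x : X) :
    l.countP (fun A => decide (x ∈ A)) ≤ 1 := by
  induction l with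
  | nil => simp
  | cons a t ih =>
    obtain ⟨hd, ht⟩ := List.pairwise_cons.mp hl
    by_cases hx : x ∈ a
    · have h0 : t.countP (fun A => decide (x ∈ A)) = 0 := by
        rw [List.countP_eq_zero]
        intro A hA
        simp only [decide_eq_true_eq]
        exact fun hxA => Set.disjoint_left.mp (hd A hA) hx hxA
      simp [List.countP_cons, hx, h0]
    · simpa [List.countP_cons, hx] using ih ht

open scoped Classical in
lemma multiset_countP_le_one_of_pairwise {ℬ : Multiset (Set X)} (hp : ℬ.Pairwise Disjoint)
    (x : X) : ℬ.countP (x ∈ ·) ≤ 1 := by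
  obtain ⟨l, rfl, hl⟩ := hp
  simpa using list_countP_le_one_of_pairwise hl x

open scoped Classical in
lemma vitali_multiset :
    ∀ ℳ : Multiset (Set X), (∀ A ∈ ℳ, A.Nonempty) →
      ∃ ℬ, ℬ ≤ ℳ ∧ ℬ.Pairwise Disjoint ∧
        ∀ A ∈ ℳ, ∃ B ∈ ℬ, (A ∩ B).Nonempty ∧ Metric.diam A ≤ Metric.diam B := by
  intro ℳ
  induction ℳ using Multiset.strongInductionOn with
  | _ s ih =>
    intro hne
    rcases eq_or_ne s 0 with rfl | hs0
    · exact ⟨0, le_rfl, ⟨[], rfl, List.Pairwise.nil⟩, by simp⟩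
    · obtain ⟨A₀, hA₀s, hA₀max⟩ := multiset_exists_max Metric.diam s hs0
      set t := (s.erase A₀).filter (fun A => Disjoint A₀ A) with ht
      have htle : t ≤ s.erase A₀ := Multiset.filter_le _ _
      have htlt : t < s := lt_of_le_of_lt htle (Multiset.erase_lt.mpr hA₀s)
      have htne : ∀ A ∈ t, A.Nonempty := fun A hA =>
        hne A (Multiset.mem_of_mem_erase (Multiset.mem_of_le htle hA))
      obtain ⟨ℬ', hℬ'le, hℬ'pw, hℬ'dom⟩ := ih t htlt htne
      refine ⟨A₀ ::ₘ ℬ', ?_, ?_, ?_⟩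
      · calc A₀ ::ₘ ℬ' ≤ A₀ ::ₘ (s.erase A₀) :=
              Multiset.cons_le_cons _ (hℬ'le.trans htle)
          _ = s := Multiset.cons_erase hA₀s
      · obtain ⟨l', hl', hpw'⟩ := hℬ'pw
        refine ⟨A₀ :: l', by rw [← Multiset.cons_coe, hl'], ?_⟩
        refine List.Pairwise.cons ?_ hpw'
        intro B hB
        have hBt : B ∈ t := Multiset.mem_of_le hℬ'le (by rw [hl']; exact_mod_cast hB)
        exact (Multiset.mem_filter.mp hBt).2
      · intro A hA
        by_cases hdisj : Disjoint A₀ A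
        · by_cases hAA₀ : A = A₀
          · subst hAA₀
            exact ⟨A, Multiset.mem_cons_self _ _, by simpa using hne A hA, le_rfl⟩
          · have hAt : A ∈ t := by
              rw [ht, Multiset.mem_filter]
              exact ⟨(Multiset.mem_erase_of_ne hAA₀).mpr hA, hdisj⟩
            obtain ⟨B, hB, h1, h2⟩ := hℬ'dom A hAt
            exact ⟨B, Multiset.mem_cons_of_mem hB, h1, h2⟩
        · refine ⟨A₀, Multiset.mem_cons_self _ _, ?_, hA₀max A hA⟩
          rw [Set.inter_comm]
          exact Set.not_disjoint_iff_nonempty_inter.mp hdisj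

lemma list_sum_eq_range_sum {α β : Type*} [AddCommMonoid β] (f : α → β) (d : α) :
    ∀ l : List α, (l.map f).sum = ∑ i ∈ Finset.range l.length, f (l.getD i d) := by
  intro l
  induction l with
  | nil => simp
  | cons a t ih =>
    rw [List.map_cons, List.sum_cons, List.length_cons, Finset.sum_range_succ', ih]
    rw [add_comm]
    congr 1

open scoped Classical in
lemma hMeasure_le_of_multiset_cover {E : Set X} {τ ε : ℝ} (hτ : 0 ≤ τ) (hε : 0 < ε)
    (ℬ : Multiset (Set X)) (hdiam : ∀ B ∈ ℬ, Metric.diam B < ε / 6)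
    (hcov : E ⊆ ⋃ B ∈ ℬ, Metric.cthickening (2 * Metric.diam B) B) :
    hMeasure E τ ε ≤ (ℬ.map fun B => ENNReal.ofReal ((5 * Metric.diam B) ^ τ)).sum := by
  classical
  set l := ℬ.toList with hl
  have hlℬ : (l : Multiset (Set X)) = ℬ := Multiset.coe_toList ℬ
  set C : ℕ → Set X := fun i =>
    Metric.cthickening (2 * Metric.diam (l.getD i ∅)) (l.getD i ∅) with hC
  have hdiamC : ∀ i, Metric.diam (C i) < ε := by
    intro i
    by_cases hi : i < l.length
    · have hmem : l.getD i ∅ ∈ ℬ := by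
        rw [← hlℬ]
        rw [List.getD_eq_getElem l ∅ hi]
        exact_mod_cast List.getElem_mem hi
      have hd := hdiam _ hmem
      have h1 : Metric.diam (C i) ≤ Metric.diam (l.getD i ∅) + 2 * (2 * Metric.diam (l.getD i ∅)) :=
        Metric.diam_cthickening_le _ (by positivity)
      nlinarith [Metric.diam_nonneg (s := l.getD i ∅)]
    · have : l.getD i ∅ = ∅ := List.getD_eq_default _ _ (le_of_not_gt hi)
      rw [hC]
      simp only [this, Metric.cthickening_empty]
      simpa using hε
  have hcovC : E ⊆ ⋃ i, C i := by
    intro x hx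
    obtain ⟨B, hB, hxB⟩ := by simpa using hcov hx
    rw [← hlℬ] at hB
    obtain ⟨i, hi, hiB⟩ := List.mem_iff_getElem.mp (by exact_mod_cast hB)
    refine Set.mem_iUnion.mpr ⟨i, ?_⟩
    rw [hC]
    simp only [List.getD_eq_getElem l ∅ hi, hiB]
    rw [Metric.mem_cthickening_iff, ENNReal.ofReal_mul (by norm_num)]
    simpa using hxB
  have h1 : hMeasure E τ ε ≤
      ∑' i, if (C i).Nonempty then ENNReal.ofReal (Metric.diam (C i) ^ τ) else 0 := by
    rw [hMeasure]
    exact le_trans (iInf_le _ C) (le_trans (iInf_le _ hcovC) (iInf_le _ hdiamC))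
  refine h1.trans ?_
  set g : ℕ → ℝ≥0∞ := fun i =>
    if i < l.length then ENNReal.ofReal ((5 * Metric.diam (l.getD i ∅)) ^ τ) else 0 with hg
  have h2 : ∀ i, (if (C i).Nonempty then ENNReal.ofReal (Metric.diam (C i) ^ τ) else 0) ≤ g i := by
    intro i
    by_cases hi : i < l.length
    · simp only [hg, hi, if_true]
      by_cases hne : (C i).Nonempty
      · rw [if_pos hne]
        apply ENNReal.ofReal_le_ofReal
        apply Real.rpow_le_rpow Metric.diam_nonneg _ hτ
        have h1 : Metric.diam (C i) ≤ Metric.diam (l.getD i ∅) + 2 * (2 * Metric.diam (l.getD i ∅)) :=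
          Metric.diam_cthickening_le _ (by positivity)
        nlinarith [Metric.diam_nonneg (s := l.getD i ∅)]
      · rw [if_neg hne]; exact zero_le
    · have : l.getD i ∅ = ∅ := List.getD_eq_default _ _ (le_of_not_gt hi)
      simp only [hC, this, Metric.cthickening_empty, hg, hi, if_false]
      simp
  refine (ENNReal.tsum_le_tsum h2).trans ?_
  have h3 : ∑' i, g i = ∑ i ∈ Finset.range l.length, g i := by
    apply tsum_eq_sum
    intro i hi
    simp only [Finset.mem_range, not_lt] at hi
    simp only [hg]
    rw [if_neg (not_lt.mpr hi)]
  rw [h3]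
  have h4 : ∑ i ∈ Finset.range l.length, g i
      = ∑ i ∈ Finset.range l.length, ENNReal.ofReal ((5 * Metric.diam (l.getD i ∅)) ^ τ) := by
    apply Finset.sum_congr rfl
    intro i hi
    simp only [hg, if_pos (Finset.mem_range.mp hi)]
  rw [h4, ← list_sum_eq_range_sum (fun B => ENNReal.ofReal ((5 * Metric.diam B) ^ τ)) ∅ l]
  rw [← hlℬ]
  simp

open scoped Classical in
lemma thmW {E : Set X} {τ ε : ℝ} (hτ : 0 ≤ τ) (hε : 0 < ε) :
    ∀ (N : ℕ) (ℳ : Multiset (Set X)), (∀ A ∈ ℳ, Metric.diam A < ε / 6) →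
      (∀ x ∈ E, N ≤ ℳ.countP (x ∈ ·)) →
      (N : ℝ≥0∞) * hMeasure E τ ε ≤
        (ℳ.map fun A => ENNReal.ofReal ((5 * Metric.diam A) ^ τ)).sum := by
  intro N
  induction N with
  | zero => intro ℳ _ _; simp
  | succ N ih =>
    intro ℳ hdiam hcov
    classical
    set ℳ' := ℳ.filter (fun A => A.Nonempty) with hM'
    have hsub : ℳ' ≤ ℳ := Multiset.filter_le _ _
    have hcount : ∀ x : X, ℳ.countP (x ∈ ·) = ℳ'.countP (x ∈ ·) := by
      intro x
      rw [hM', Multiset.countP_filter]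
      apply Multiset.countP_congr rfl
      intro A _
      rw [eq_iff_iff]
      exact ⟨fun hx => ⟨hx, ⟨x, hx⟩⟩, fun hx => hx.1⟩
    have hne' : ∀ A ∈ ℳ', A.Nonempty := fun A hA => (Multiset.mem_filter.mp hA).2
    obtain ⟨ℬ, hℬle, hℬpw, hℬdom⟩ := vitali_multiset ℳ' hne'
    have hℬdiam : ∀ B ∈ ℬ, Metric.diam B < ε / 6 := fun B hB =>
      hdiam B (Multiset.mem_of_le (hℬle.trans hsub) hB)
    have hcovℬ : E ⊆ ⋃ B ∈ ℬ, Metric.cthickening (2 * Metric.diam B) B := by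
      intro x hx
      have h1 : 0 < ℳ'.countP (x ∈ ·) := by
        rw [← hcount]
        exact lt_of_lt_of_le (Nat.succ_pos N) (hcov x hx)
      obtain ⟨A, hA, hxA⟩ := Multiset.countP_pos.mp h1
      obtain ⟨B, hB, hABne, hdAB⟩ := hℬdom A hA
      obtain ⟨z, hzA, hzB⟩ := hABne
      refine Set.mem_iUnion₂.mpr ⟨B, hB, ?_⟩
      apply Metric.mem_cthickening_of_dist_le x z _ _ hzB
      calc dist x z ≤ Metric.diam A := Metric.dist_le_diam_of_mem (bdd_all A) hxA hzA
        _ ≤ Metric.diam B := hdAB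
        _ ≤ 2 * Metric.diam B := by nlinarith [Metric.diam_nonneg (s := B)]
    have hhm : hMeasure E τ ε ≤ (ℬ.map fun A => ENNReal.ofReal ((5 * Metric.diam A) ^ τ)).sum :=
      hMeasure_le_of_multiset_cover hτ hε ℬ hℬdiam hcovℬ
    -- remainder
    have hrest : ∀ x ∈ E, N ≤ (ℳ' - ℬ).countP (x ∈ ·) := by
      intro x hx
      have hdec : (ℳ' - ℬ) + ℬ = ℳ' := tsub_add_cancel_of_le hℬle
      have hsplit : ℳ'.countP (x ∈ ·) = (ℳ' - ℬ).countP (x ∈ ·) + ℬ.countP (x ∈ ·) := by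
        rw [← Multiset.countP_add, hdec]
      have h1 : N + 1 ≤ ℳ'.countP (x ∈ ·) := by rw [← hcount]; exact hcov x hx
      have h2 : ℬ.countP (x ∈ ·) ≤ 1 := multiset_countP_le_one_of_pairwise hℬpw x
      omega
    have hdiamrest : ∀ A ∈ ℳ' - ℬ, Metric.diam A < ε / 6 := fun A hA =>
      hdiam A (Multiset.mem_of_le (le_trans (Multiset.sub_le_self _ _) hsub) hA)
    have hIH := ih (ℳ' - ℬ) hdiamrest hrest
    have hsum : ((ℳ' - ℬ).map fun A => ENNReal.ofReal ((5 * Metric.diam A) ^ τ)).sum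
        + (ℬ.map fun A => ENNReal.ofReal ((5 * Metric.diam A) ^ τ)).sum
        = (ℳ'.map fun A => ENNReal.ofReal ((5 * Metric.diam A) ^ τ)).sum := by
      rw [← Multiset.sum_add, ← Multiset.map_add, tsub_add_cancel_of_le hℬle]
    have hmono : (ℳ'.map fun A => ENNReal.ofReal ((5 * Metric.diam A) ^ τ)).sum
        ≤ (ℳ.map fun A => ENNReal.ofReal ((5 * Metric.diam A) ^ τ)).sum := by
      obtain ⟨k, hk⟩ := Multiset.le_iff_exists_add.mp hsub
      rw [hk, Multiset.map_add, Multiset.sum_add]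
      exact le_add_right le_rfl
    calc ((N + 1 : ℕ) : ℝ≥0∞) * hMeasure E τ ε
        = (N : ℝ≥0∞) * hMeasure E τ ε + hMeasure E τ ε := by
          push_cast; ring
      _ ≤ ((ℳ' - ℬ).map fun A => ENNReal.ofReal ((5 * Metric.diam A) ^ τ)).sum
          + (ℬ.map fun A => ENNReal.ofReal ((5 * Metric.diam A) ^ τ)).sum := add_le_add hIH hhm
      _ = (ℳ'.map fun A => ENNReal.ofReal ((5 * Metric.diam A) ^ τ)).sum := hsum
      _ ≤ _ := hmono

open scoped Classical in
lemma hMeasure_exp_compare {E : Set X} {τ s' ε ε₀ : ℝ} (hτ : 0 < τ) (hs' : τ ≤ s')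
    (hε₀ : 0 < ε₀) (hεε₀ : ε ≤ ε₀) :
    ENNReal.ofReal (ε₀ ^ (τ - s')) * hMeasure E s' ε ≤ hMeasure E τ ε := by
  have hs'0 : 0 < s' := lt_of_lt_of_le hτ hs'
  conv_rhs => rw [hMeasure]
  refine le_iInf fun C => le_iInf fun hcov => le_iInf fun hdiam => ?_
  have step1 : hMeasure E s' ε ≤
      ∑' i, if (C i).Nonempty then ENNReal.ofReal (Metric.diam (C i) ^ s') else 0 := by
    rw [hMeasure]
    exact le_trans (iInf_le _ C) (le_trans (iInf_le _ hcov) (iInf_le _ hdiam))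
  calc ENNReal.ofReal (ε₀ ^ (τ - s')) * hMeasure E s' ε
      ≤ ENNReal.ofReal (ε₀ ^ (τ - s')) *
        ∑' i, if (C i).Nonempty then ENNReal.ofReal (Metric.diam (C i) ^ s') else 0 :=
      mul_le_mul_right step1 _
    _ = ∑' i, ENNReal.ofReal (ε₀ ^ (τ - s')) *
        (if (C i).Nonempty then ENNReal.ofReal (Metric.diam (C i) ^ s') else 0) :=
      ENNReal.tsum_mul_left.symm
    _ ≤ ∑' i, if (C i).Nonempty then ENNReal.ofReal (Metric.diam (C i) ^ τ) else 0 := by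
      apply ENNReal.tsum_le_tsum
      intro i
      by_cases hne : (C i).Nonempty
      · rw [if_pos hne, if_pos hne]
        set d := Metric.diam (C i) with hd
        have hd0 : 0 ≤ d := Metric.diam_nonneg
        rcases eq_or_lt_of_le hd0 with hdz | hdpos
        · rw [← hdz, Real.zero_rpow (ne_of_gt hτ), Real.zero_rpow (ne_of_gt hs'0)]
          simp
        · rw [← ENNReal.ofReal_mul (by positivity)]
          apply ENNReal.ofReal_le_ofReal
          have hdε₀ : d ≤ ε₀ := le_trans (le_of_lt (hdiam i)) hεε₀
          have h1 : ε₀ ^ (τ - s') ≤ d ^ (τ - s') := by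
            rw [show τ - s' = -(s' - τ) by ring, Real.rpow_neg hε₀.le, Real.rpow_neg hd0]
            apply inv_anti₀ (Real.rpow_pos_of_pos hdpos _)
            exact Real.rpow_le_rpow hd0 hdε₀ (by linarith)
          calc ε₀ ^ (τ - s') * d ^ s' ≤ d ^ (τ - s') * d ^ s' := by
                apply mul_le_mul_of_nonneg_right h1 (Real.rpow_nonneg hd0 _)
            _ = d ^ τ := by
                rw [← Real.rpow_add hdpos]
                ring_nf
      · rw [if_neg hne, if_neg hne, mul_zero]

end Combinatorial

section Functional
variable {X : Type} [MetricSpace X] [CompactSpace X]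

lemma list_map_sum_mul {α : Type*} (a : ℝ) (f : α → ℝ) :
    ∀ l : List α, (l.map fun i => a * f i).sum = a * (l.map f).sum := by
  intro l
  induction l with
  | nil => simp
  | cons b t ih => simp [ih, mul_add]

/-- total weight of a weighted family at a point -/
noncomputable def covS (L : List (ℝ × Set X)) (x : X) : ℝ :=
  (L.map fun q => q.1 * Set.indicator q.2 (fun _ => (1 : ℝ)) x).sum

/-- total cost of a weighted family -/
noncomputable def costS (τ : ℝ) (L : List (ℝ × Set X)) : ℝ :=
  (L.map fun q => q.1 * Metric.diam q.2 ^ τ).sum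

/-- admissible weighted families dominating `f` on `E` -/
def Adm (E : Set X) (ε : ℝ) (f : C(X, ℝ)) (L : List (ℝ × Set X)) : Prop :=
  (∀ q ∈ L, 0 ≤ q.1 ∧ Metric.diam q.2 < ε / 6) ∧ ∀ x ∈ E, f x ≤ covS L x

/-- the sublinear functional: infimal cost of an admissible family -/
noncomputable def pF (E : Set X) (ε τ : ℝ) (f : C(X, ℝ)) : ℝ :=
  sInf (costS τ '' {L | Adm E ε f L})

variable {E : Set X} {ε τ : ℝ}

lemma covS_nonneg {L : List (ℝ × Set X)} (h : ∀ q ∈ L, 0 ≤ q.1) (x : X) : 0 ≤ covS L x := by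
  apply List.sum_nonneg
  intro v hv
  obtain ⟨q, hq, rfl⟩ := List.mem_map.mp hv
  exact mul_nonneg (h q hq) (Set.indicator_nonneg (fun _ _ => zero_le_one) x)

lemma covS_append (L₁ L₂ : List (ℝ × Set X)) (x : X) :
    covS (L₁ ++ L₂) x = covS L₁ x + covS L₂ x := by
  simp [covS]

lemma costS_nonneg {L : List (ℝ × Set X)} (h : ∀ q ∈ L, 0 ≤ q.1) : 0 ≤ costS τ L := by
  apply List.sum_nonneg
  intro v hv
  obtain ⟨q, hq, rfl⟩ := List.mem_map.mp hv
  exact mul_nonneg (h q hq) (Real.rpow_nonneg Metric.diam_nonneg _)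

lemma costS_append (L₁ L₂ : List (ℝ × Set X)) :
    costS τ (L₁ ++ L₂) = costS τ L₁ + costS τ L₂ := by
  simp [costS]

lemma costS_scale (a : ℝ) (L : List (ℝ × Set X)) :
    costS τ (L.map fun q => (a * q.1, q.2)) = a * costS τ L := by
  rw [costS, costS, List.map_map, ← list_map_sum_mul]
  congr 1
  apply List.map_congr_left
  intro q _
  simp [mul_assoc]

lemma covS_scale (a : ℝ) (L : List (ℝ × Set X)) (x : X) :
    covS (L.map fun q => (a * q.1, q.2)) x = a * covS L x := by
  rw [covS, covS, List.map_map, ← list_map_sum_mul]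
  congr 1
  apply List.map_congr_left
  intro q _
  simp [mul_assoc]

lemma adm_exists (hE : IsCompact E) (hε : 0 < ε) (f : C(X, ℝ)) :
    ∃ L, Adm E ε f L := by
  obtain ⟨t, ht⟩ := hE.elim_finite_subcover (fun y : X => Metric.ball y (ε / 24))
    (fun _ => Metric.isOpen_ball)
    (fun x _ => Set.mem_iUnion.mpr ⟨x, Metric.mem_ball_self (by positivity)⟩)
  refine ⟨t.toList.map fun y => (‖f‖, Metric.ball y (ε / 24)), ?_, ?_⟩
  · intro q hq
    obtain ⟨y, _, rfl⟩ := List.mem_map.mp hq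
    refine ⟨norm_nonneg f, ?_⟩
    have := Metric.diam_ball (x := y) (show (0:ℝ) ≤ ε / 24 by positivity)
    linarith
  · intro x hx
    obtain ⟨y, hyt, hxy⟩ := Set.mem_iUnion₂.mp (ht hx)
    have hmem : (‖f‖, Metric.ball y (ε / 24)) ∈
        t.toList.map fun y => (‖f‖, Metric.ball y (ε / 24)) :=
      List.mem_map.mpr ⟨y, (Finset.mem_toList).mpr hyt, rfl⟩
    have h1 : (‖f‖ : ℝ) * Set.indicator (Metric.ball y (ε / 24)) (fun _ => (1:ℝ)) x = ‖f‖ := by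
      rw [Set.indicator_of_mem hxy]
      simp
    calc f x ≤ ‖f‖ := le_trans (le_abs_self _) (f.norm_coe_le_norm x)
      _ = ‖f‖ * Set.indicator (Metric.ball y (ε / 24)) (fun _ => (1:ℝ)) x := h1.symm
      _ ≤ covS _ x := by
          rw [covS]
          refine List.single_le_sum (fun v hv => ?_) _ (List.mem_map.mpr ⟨_, hmem, rfl⟩)
          obtain ⟨q, hq, rfl⟩ := List.mem_map.mp hv
          obtain ⟨y', _, rfl⟩ := List.mem_map.mp hq
          exact mul_nonneg (norm_nonneg f) (Set.indicator_nonneg (fun _ _ => zero_le_one) x)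

lemma pF_bddBelow : BddBelow (costS (X := X) τ '' {L | Adm E ε f L}) := by
  refine ⟨0, ?_⟩
  rintro v ⟨L, hL, rfl⟩
  exact costS_nonneg (fun q hq => (hL.1 q hq).1)

lemma pF_nonneg (f : C(X, ℝ)) (hex : ∃ L, Adm E ε f L) : 0 ≤ pF E ε τ f := by
  apply le_csInf
  · obtain ⟨L, hL⟩ := hex
    exact ⟨costS τ L, L, hL, rfl⟩
  · rintro v ⟨L, hL, rfl⟩
    exact costS_nonneg (fun q hq => (hL.1 q hq).1)

lemma pF_le {f : C(X, ℝ)} {L : List (ℝ × Set X)} (hL : Adm E ε f L) :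
    pF E ε τ f ≤ costS τ L :=
  csInf_le pF_bddBelow ⟨L, hL, rfl⟩

lemma exists_adm_lt {f : C(X, ℝ)} {a : ℝ} (hex : ∃ L, Adm E ε f L)
    (h : pF E ε τ f < a) : ∃ L, Adm E ε f L ∧ costS τ L < a := by
  obtain ⟨L₀, hL₀⟩ := hex
  have hs : (costS (X := X) τ '' {L | Adm E ε f L}).Nonempty := ⟨costS τ L₀, L₀, hL₀, rfl⟩
  obtain ⟨v, ⟨L, hL, rfl⟩, hv⟩ := exists_lt_of_csInf_lt hs h
  exact ⟨L, hL, hv⟩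

lemma pF_add_le (hE : IsCompact E) (hε : 0 < ε) (f g : C(X, ℝ)) :
    pF E ε τ (f + g) ≤ pF E ε τ f + pF E ε τ g := by
  apply le_of_forall_pos_le_add
  intro δ hδ
  obtain ⟨L₁, hL₁, hc₁⟩ := exists_adm_lt (adm_exists hE hε f)
    (lt_add_of_pos_right _ (half_pos hδ) : pF E ε τ f < pF E ε τ f + δ / 2)
  obtain ⟨L₂, hL₂, hc₂⟩ := exists_adm_lt (adm_exists hE hε g)
    (lt_add_of_pos_right _ (half_pos hδ) : pF E ε τ g < pF E ε τ g + δ / 2)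
  have hadm : Adm E ε (f + g) (L₁ ++ L₂) := by
    constructor
    · intro q hq
      rcases List.mem_append.mp hq with h | h
      · exact hL₁.1 q h
      · exact hL₂.1 q h
    · intro x hx
      rw [covS_append]
      exact add_le_add (by simpa using hL₁.2 x hx) (by simpa using hL₂.2 x hx)
  calc pF E ε τ (f + g) ≤ costS τ (L₁ ++ L₂) := pF_le hadm
    _ = costS τ L₁ + costS τ L₂ := costS_append _ _
    _ ≤ pF E ε τ f + pF E ε τ g + δ := by linarith

lemma pF_smul_le (hE : IsCompact E) (hε : 0 < ε) {c : ℝ} (hc : 0 < c) (f : C(X, ℝ)) :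
    pF E ε τ (c • f) ≤ c * pF E ε τ f := by
  apply le_of_forall_pos_le_add
  intro δ hδ
  obtain ⟨L, hL, hclt⟩ := exists_adm_lt (adm_exists hE hε f)
    (lt_add_of_pos_right _ (div_pos hδ hc) : pF E ε τ f < pF E ε τ f + δ / c)
  have hadm : Adm E ε (c • f) (L.map fun q => (c * q.1, q.2)) := by
    constructor
    · intro q hq
      obtain ⟨q', hq', rfl⟩ := List.mem_map.mp hq
      exact ⟨mul_nonneg hc.le (hL.1 q' hq').1, (hL.1 q' hq').2⟩
    · intro x hx
      rw [covS_scale]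
      have : (c • f) x = c * f x := by simp
      rw [this]
      exact mul_le_mul_of_nonneg_left (hL.2 x hx) hc.le
  calc pF E ε τ (c • f) ≤ costS τ (L.map fun q => (c * q.1, q.2)) := pF_le hadm
    _ = c * costS τ L := costS_scale _ _
    _ ≤ c * (pF E ε τ f + δ / c) := mul_le_mul_of_nonneg_left hclt.le hc.le
    _ = c * pF E ε τ f + δ := by
        rw [mul_add, mul_comm c (δ / c), div_mul_cancel₀ δ hc.ne']

lemma pF_smul (hE : IsCompact E) (hε : 0 < ε) {c : ℝ} (hc : 0 < c) (f : C(X, ℝ)) :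
    pF E ε τ (c • f) = c * pF E ε τ f := by
  refine le_antisymm (pF_smul_le hE hε hc f) ?_
  have h1 : pF E ε τ (c⁻¹ • (c • f)) ≤ c⁻¹ * pF E ε τ (c • f) :=
    pF_smul_le hE hε (inv_pos.mpr hc) _
  have h2 : c⁻¹ • (c • f) = f := by
    rw [smul_smul, inv_mul_cancel₀ hc.ne', one_smul]
  rw [h2] at h1
  calc c * pF E ε τ f ≤ c * (c⁻¹ * pF E ε τ (c • f)) := mul_le_mul_of_nonneg_left h1 hc.le
    _ = pF E ε τ (c • f) := by field_simp

lemma pF_nonpos {f : C(X, ℝ)} (h : ∀ x ∈ E, f x ≤ 0) : pF E ε τ f ≤ 0 := by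
  have hadm : Adm E ε f [] := by
    constructor
    · intro q hq; simp at hq
    · intro x hx
      simpa [covS] using h x hx
  simpa [costS] using pF_le hadm

lemma pF_zero : pF (X := X) E ε τ 0 = 0 := by
  have h1 : pF E ε τ 0 ≤ 0 := pF_nonpos (fun x _ => le_rfl)
  have hadm : Adm E ε (0 : C(X,ℝ)) [] := by
    constructor
    · intro q hq; simp at hq
    · intro x hx; simp [covS]
  have h2 : 0 ≤ pF E ε τ 0 := pF_nonneg 0 ⟨[], hadm⟩
  linarith

lemma exists_functional (hE : IsCompact E) (hne : E.Nonempty) (hε : 0 < ε) :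
    ∃ ℓ : C(X, ℝ) →ₗ[ℝ] ℝ, ℓ 1 = pF E ε τ 1 ∧ ∀ f, ℓ f ≤ pF E ε τ f := by
  have hX : Nonempty X := ⟨hne.choose⟩
  have h1ne : (1 : C(X, ℝ)) ≠ 0 := by
    intro h
    have h2 := ContinuousMap.congr_fun h hne.choose
    simp at h2
  have hneg : -pF E ε τ 1 ≤ pF E ε τ (-1) := by
    have h0 : pF E ε τ (1 + (-1)) ≤ pF E ε τ 1 + pF E ε τ (-1) := pF_add_le hE hε _ _
    rw [show (1 : C(X,ℝ)) + (-1) = 0 by ring, pF_zero] at h0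
    linarith
  set pm := LinearPMap.mkSpanSingleton (K := ℝ) (L := ℝ) (σ := RingHom.id ℝ) (1 : C(X, ℝ)) (pF E ε τ 1) h1ne with hpm
  have hdle : ∀ z : pm.domain, pm z ≤ pF E ε τ z := by
    rintro ⟨z, hz⟩
    have hz' : z ∈ Submodule.span ℝ {(1 : C(X, ℝ))} := hz
    obtain ⟨a, rfl⟩ := Submodule.mem_span_singleton.mp hz'
    have hval : pm ⟨a • (1 : C(X,ℝ)), hz⟩ = a • pF E ε τ 1 :=
      LinearPMap.mkSpanSingleton'_apply _ _ _ a _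
    rw [hval]
    simp only [smul_eq_mul]
    rcases lt_trichotomy a 0 with hneg' | rfl | hpos
    · have h2 : a • (1 : C(X,ℝ)) = (-a) • (-1) := by module
      rw [show pF E ε τ (a • (1:C(X,ℝ))) = pF E ε τ ((-a) • (-1)) by rw [h2]]
      rw [pF_smul hE hε (by linarith) (-1)]
      nlinarith
    · simp only [zero_smul, zero_mul]
      rw [pF_zero]
    · rw [pF_smul hE hε hpos 1]
  obtain ⟨g, hg1, hg2⟩ := exists_extension_of_le_sublinear pm (pF E ε τ)
    (fun c hc x => pF_smul hE hε hc x) (pF_add_le hE hε) hdle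
  refine ⟨g, ?_, hg2⟩
  have hmem : (1 : C(X, ℝ)) ∈ pm.domain := Submodule.mem_span_singleton_self _
  have := hg1 ⟨1, hmem⟩
  rw [this]
  exact LinearPMap.mkSpanSingleton'_apply_self _ _ _ _

end Functional


section Bump

variable {X : Type} [MetricSpace X]

/-- a Urysohn-type bump function for a set `K` at scale `η` -/
noncomputable def bump (K : Set X) (η : ℝ) : C(X, ℝ) :=
  ⟨fun y => max (1 - Metric.infDist y K / η) 0, by
    apply Continuous.max _ continuous_const
    exact continuous_const.sub ((Metric.continuous_infDist_pt K).div_const η)⟩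

lemma bump_apply (K : Set X) (η : ℝ) (y : X) :
    bump K η y = max (1 - Metric.infDist y K / η) 0 := rfl

lemma bump_nonneg (K : Set X) (η : ℝ) (y : X) : 0 ≤ bump K η y := le_max_right _ _

lemma bump_le_one {K : Set X} {η : ℝ} (hη : 0 < η) (y : X) : bump K η y ≤ 1 := by
  rw [bump_apply]
  apply max_le _ zero_le_one
  have h1 : 0 ≤ Metric.infDist y K / η := div_nonneg Metric.infDist_nonneg hη.le
  linarith

lemma bump_eq_one_of_mem (K : Set X) (η : ℝ) {y : X} (h : y ∈ K) : bump K η y = 1 := by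
  rw [bump_apply, Metric.infDist_zero_of_mem h]
  norm_num

lemma bump_eq_zero {K : Set X} {η : ℝ} (hη : 0 < η) {y : X}
    (h : ¬ Metric.infDist y K < η) : bump K η y = 0 := by
  rw [bump_apply]
  apply max_eq_right
  have h1 : η ≤ Metric.infDist y K := not_lt.mp h
  have h2 : 1 ≤ Metric.infDist y K / η := (one_le_div hη).mpr h1
  linarith

end Bump

section ContentMeasure

open MeasureTheory TopologicalSpace

variable {X : Type} [MetricSpace X] [CompactSpace X] [MeasurableSpace X] [BorelSpace X]

theorem exists_measure_main (E : Set X) (hE : IsCompact E) (hne : E.Nonempty)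
    {ε τ : ℝ} (hτ : 0 < τ) (hε : 0 < ε)
    (hbig : ∀ L : List (ℝ × Set X), Adm E ε 1 L → 1 ≤ costS τ L) :
    ∃ μ : Measure X, IsProbabilityMeasure μ ∧ μ Eᶜ = 0 ∧
      ∀ E' : Set X, E' ⊆ E → Metric.diam E' < ε / 6 →
        μ E' ≤ ENNReal.ofReal (Metric.diam E' ^ τ) := by
  obtain ⟨ℓ, hℓ1, hℓle⟩ := exists_functional (τ := τ) hE hne hε
  -- positivity and monotonicity of the functional
  have hℓ0 : ∀ f : C(X, ℝ), (∀ y, 0 ≤ f y) → 0 ≤ ℓ f := by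
    intro f hf
    have h1 : ℓ (-f) ≤ pF E ε τ (-f) := hℓle _
    have h2 : pF E ε τ (-f) ≤ 0 := pF_nonpos (fun x _ => by simpa using hf x)
    have h3 : ℓ (-f) = -ℓ f := map_neg ℓ f
    linarith
  have hℓmono : ∀ f g : C(X, ℝ), (∀ y, f y ≤ g y) → ℓ f ≤ ℓ g := by
    intro f g h
    have h1 := hℓ0 (g - f) (fun y => by simpa using h y)
    have h2 : ℓ (g - f) = ℓ g - ℓ f := map_sub ℓ g f
    linarith
  have hp1 : (1 : ℝ) ≤ pF E ε τ 1 := by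
    apply le_csInf
    · obtain ⟨L, hL⟩ := adm_exists hE hε (1 : C(X, ℝ))
      exact ⟨costS τ L, L, hL, rfl⟩
    · rintro v ⟨L, hL, rfl⟩
      exact hbig L hL
  -- the content
  set lamSet : Set X → Set ℝ := fun K =>
    {v | ∃ f : C(X, ℝ), (∀ y, 0 ≤ f y) ∧ (∀ y ∈ K, 1 ≤ f y) ∧ v = ℓ f} with hlamSet
  set lam : Set X → ℝ := fun K => sInf (lamSet K) with hlam
  have hlamne : ∀ K, (lamSet K).Nonempty := by
    intro K
    exact ⟨ℓ 1, 1, fun y => by simp, fun y _ => by simp, rfl⟩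
  have hlambdd : ∀ K, BddBelow (lamSet K) := by
    intro K
    refine ⟨0, ?_⟩
    rintro v ⟨f, hf0, _, rfl⟩
    exact hℓ0 f hf0
  have hlam0 : ∀ K, 0 ≤ lam K := by
    intro K
    apply le_csInf (hlamne K)
    rintro v ⟨f, hf0, _, rfl⟩
    exact hℓ0 f hf0
  have hlamle : ∀ (K : Set X) (f : C(X, ℝ)), (∀ y, 0 ≤ f y) → (∀ y ∈ K, 1 ≤ f y) →
      lam K ≤ ℓ f := fun K f h1 h2 => csInf_le (hlambdd K) ⟨f, h1, h2, rfl⟩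
  have hlammono : ∀ K₁ K₂ : Set X, K₁ ⊆ K₂ → lam K₁ ≤ lam K₂ := by
    intro K₁ K₂ hsub
    apply csInf_le_csInf (hlambdd K₁) (hlamne K₂)
    rintro v ⟨f, hf0, hf1, rfl⟩
    exact ⟨f, hf0, fun y hy => hf1 y (hsub hy), rfl⟩
  have hlamempty : lam ∅ = 0 := by
    apply le_antisymm _ (hlam0 ∅)
    have : lam ∅ ≤ ℓ 0 := hlamle ∅ 0 (fun y => by simp) (fun y hy => absurd hy (Set.notMem_empty y))
    simpa [map_zero] using this
  have hlamsub : ∀ K₁ K₂ : Set X, lam (K₁ ∪ K₂) ≤ lam K₁ + lam K₂ := by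
    intro K₁ K₂
    apply le_of_forall_pos_le_add
    intro δ hδ
    obtain ⟨v₁, ⟨f₁, hf₁0, hf₁1, rfl⟩, hv₁⟩ := exists_lt_of_csInf_lt (hlamne K₁)
      (lt_add_of_pos_right (lam K₁) (half_pos hδ))
    obtain ⟨v₂, ⟨f₂, hf₂0, hf₂1, rfl⟩, hv₂⟩ := exists_lt_of_csInf_lt (hlamne K₂)
      (lt_add_of_pos_right (lam K₂) (half_pos hδ))
    have h1 : lam (K₁ ∪ K₂) ≤ ℓ (f₁ + f₂) := by
      apply hlamle
      · intro y; simpa using add_nonneg (hf₁0 y) (hf₂0 y)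
      · intro y hy
        rcases hy with hy | hy
        · have := hf₁1 y hy; have := hf₂0 y; simp only [ContinuousMap.add_apply]; linarith
        · have := hf₂1 y hy; have := hf₁0 y; simp only [ContinuousMap.add_apply]; linarith
    rw [map_add] at h1
    linarith
  have hlamsup : ∀ K₁ K₂ : Set X, IsCompact K₁ → IsCompact K₂ → Disjoint K₁ K₂ →
      lam K₁ + lam K₂ ≤ lam (K₁ ∪ K₂) := by
    intro K₁ K₂ hc₁ hc₂ hd
    rcases Set.eq_empty_or_nonempty K₁ with rfl | hK₁ne
    · rw [hlamempty, Set.empty_union, zero_add]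
    rcases Set.eq_empty_or_nonempty K₂ with rfl | hK₂ne
    · rw [hlamempty, Set.union_empty, add_zero]
    obtain ⟨δ, hδpos, hdisj⟩ := hd.exists_thickenings hc₁ hc₂.isClosed
    apply le_csInf (hlamne _)
    rintro v ⟨f, hf0, hf1, rfl⟩
    set φ := bump K₁ δ with hφ
    have hφK₂ : ∀ y ∈ K₂, φ y = 0 := by
      intro y hy
      apply bump_eq_zero hδpos
      intro hlt
      have h1 : y ∈ Metric.thickening δ K₁ := (Metric.mem_thickening_iff_infDist_lt hK₁ne).mpr hlt
      have h2 : y ∈ Metric.thickening δ K₂ := Metric.self_subset_thickening hδpos _ hy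
      exact Set.disjoint_left.mp hdisj h1 h2
    have hae : lam K₁ ≤ ℓ (f * φ) := by
      apply hlamle
      · intro y
        simpa using mul_nonneg (hf0 y) (bump_nonneg K₁ δ y)
      · intro y hy
        have h1 : φ y = 1 := bump_eq_one_of_mem K₁ δ hy
        have h2 : 1 ≤ f y := hf1 y (Set.mem_union_left _ hy)
        simp only [ContinuousMap.mul_apply, h1, mul_one]
        exact h2
    have hbe : lam K₂ ≤ ℓ (f * (1 - φ)) := by
      apply hlamle
      · intro y
        have h1 : φ y ≤ 1 := bump_le_one hδpos y
        have h2 : (0:ℝ) ≤ 1 - φ y := by linarith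
        simpa using mul_nonneg (hf0 y) h2
      · intro y hy
        have h1 : φ y = 0 := hφK₂ y hy
        have h2 : 1 ≤ f y := hf1 y (Set.mem_union_right _ hy)
        simp only [ContinuousMap.mul_apply, ContinuousMap.sub_apply, ContinuousMap.one_apply, h1]
        simpa using h2
    have hsplit : ℓ (f * φ) + ℓ (f * (1 - φ)) = ℓ f := by
      rw [← map_add]
      congr 1
      ring
    linarith
  set Λ : Content X :=
    { toFun := fun K => (lam K.1).toNNReal
      mono' := fun K₁ K₂ h => Real.toNNReal_mono (hlammono _ _ h)
      sup_disjoint' := by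
        intro K₁ K₂ hd _ _
        have hcoe : ((K₁ ⊔ K₂ : Compacts X) : Set X) = (K₁ : Set X) ∪ (K₂ : Set X) :=
          Compacts.coe_sup K₁ K₂
        have h1 : lam ((K₁ ⊔ K₂ : Compacts X) : Set X) = lam K₁.1 + lam K₂.1 := by
          rw [hcoe]
          exact le_antisymm (hlamsub _ _) (hlamsup _ _ K₁.2 K₂.2 hd)
        show (lam ((K₁ ⊔ K₂ : Compacts X) : Set X)).toNNReal
            = (lam K₁.1).toNNReal + (lam K₂.1).toNNReal
        rw [h1, Real.toNNReal_add (hlam0 _) (hlam0 _)]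
      sup_le' := by
        intro K₁ K₂
        have hcoe : ((K₁ ⊔ K₂ : Compacts X) : Set X) = (K₁ : Set X) ∪ (K₂ : Set X) :=
          Compacts.coe_sup K₁ K₂
        show (lam ((K₁ ⊔ K₂ : Compacts X) : Set X)).toNNReal
            ≤ (lam K₁.1).toNNReal + (lam K₂.1).toNNReal
        rw [hcoe]
        exact le_trans (Real.toNNReal_mono (hlamsub _ _)) (Real.toNNReal_add_le)
      } with hΛ
  have hΛap : ∀ K : Compacts X, Λ K = ((lam (K : Set X)).toNNReal : ℝ≥0∞) := fun K => rfl
  set μ₀ := Λ.measure with hμ₀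
  -- total mass at least one
  have huniv_eq : μ₀ univ = Λ.innerContent ⟨univ, isOpen_univ⟩ := by
    rw [hμ₀, Λ.measure_apply MeasurableSet.univ, Λ.outerMeasure_of_isOpen univ isOpen_univ]
  have hμuniv1 : 1 ≤ μ₀ univ := by
    rw [huniv_eq]
    refine le_trans ?_ (Λ.le_innerContent ⟨univ, isCompact_univ⟩ ⟨univ, isOpen_univ⟩ subset_rfl)
    rw [hΛap]
    have h1 : (1:ℝ) ≤ lam univ := by
      apply le_csInf (hlamne _)
      rintro v ⟨f, hf0, hf1, rfl⟩
      have h2 : ℓ 1 ≤ ℓ f := hℓmono 1 f (fun y => by simpa using hf1 y (Set.mem_univ y))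
      rw [hℓ1] at h2
      linarith
    have h2 : (1 : ℝ≥0) ≤ (lam univ).toNNReal := by
      rw [← Real.toNNReal_one]
      exact Real.toNNReal_mono h1
    exact_mod_cast h2

  have hic : ∀ U : Opens X, Λ.innerContent U
      = ⨆ (K : Compacts X) (_ : (K : Set X) ⊆ U), Λ K := fun U => rfl
  have hμuniv_netop : μ₀ univ ≠ ⊤ := by
    rw [huniv_eq]
    exact ne_top_of_le_ne_top (Λ.lt_top ⟨univ, isCompact_univ⟩).ne
      (Λ.innerContent_le ⟨univ, isOpen_univ⟩ ⟨univ, isCompact_univ⟩ subset_rfl)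
  have hμEc : μ₀ Eᶜ = 0 := by
    have hopen : IsOpen Eᶜ := hE.isClosed.isOpen_compl
    rw [hμ₀, Λ.measure_apply hopen.measurableSet, Λ.outerMeasure_of_isOpen _ hopen]
    have h0 : Λ.innerContent ⟨Eᶜ, hopen⟩ ≤ 0 := by
      rw [hic]
      refine iSup₂_le ?_
      intro K hK
      have hle : lam (K : Set X) ≤ 0 := by
        rcases Set.eq_empty_or_nonempty (K : Set X) with hKe | hKne
        · rw [hKe, hlamempty]
        · obtain ⟨δ, hδpos, hsubδ⟩ := K.2.exists_thickening_subset_open hopen hK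
          refine le_trans (hlamle _ (bump (K : Set X) δ) (bump_nonneg _ _)
            (fun y hy => le_of_eq (bump_eq_one_of_mem _ _ hy).symm)) ?_
          refine le_trans (hℓle _) ?_
          apply pF_nonpos
          intro x hx
          have hz : bump (K : Set X) δ x = 0 := by
            apply bump_eq_zero hδpos
            intro hlt
            have hmem : x ∈ Metric.thickening δ (K : Set X) :=
              (Metric.mem_thickening_iff_infDist_lt hKne).mpr hlt
            exact (hsubδ hmem) hx
          rw [hz]
      rw [hΛap, Real.toNNReal_of_nonpos hle]
      simp
    exact le_antisymm h0 zero_le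
  have hmain : ∀ E' : Set X, E' ⊆ E → E'.Nonempty → Metric.diam E' < ε / 6 →
      μ₀ E' ≤ ENNReal.ofReal (Metric.diam E' ^ τ) := by
    intro E' hsub hne' hdiamE'
    set t := Metric.diam E' with htdef
    have ht0 : 0 ≤ t := Metric.diam_nonneg
    set K := closure E' with hKc
    have hKdiam : Metric.diam K = t := Metric.diam_closure E'
    have hKne : K.Nonempty := hne'.closure
    set η₀ : ℝ := (ε / 6 - t) / 8 with hη₀def
    have hη₀pos : 0 < η₀ := by rw [hη₀def]; linarith
    have hstep : ∀ η : ℝ, 0 < η → η ≤ η₀ → μ₀ E' ≤ ENNReal.ofReal ((t + 4 * η) ^ τ) := by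
      intro η hηpos hηle
      have hsubth : E' ⊆ Metric.thickening η K :=
        subset_closure.trans (Metric.self_subset_thickening hηpos K)
      have h1 : μ₀ E' ≤ μ₀ (Metric.thickening η K) := measure_mono hsubth
      have h2 : μ₀ (Metric.thickening η K)
          = Λ.innerContent ⟨Metric.thickening η K, Metric.isOpen_thickening⟩ := by
        rw [hμ₀, Λ.measure_apply Metric.isOpen_thickening.measurableSet,
          Λ.outerMeasure_of_isOpen _ Metric.isOpen_thickening]
      refine h1.trans (h2.le.trans ?_)
      rw [hic]
      refine iSup₂_le ?_
      intro K' hK'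
      rw [hΛap]
      rcases Set.eq_empty_or_nonempty (K' : Set X) with hKe' | hKne'
      · rw [hKe', hlamempty]
        simp
      · set A := Metric.thickening η (K' : Set X) with hA
        have hdiamA : Metric.diam A ≤ t + 4 * η := by
          have d1 : Metric.diam A ≤ Metric.diam (K' : Set X) + 2 * η :=
            Metric.diam_thickening_le _ hηpos.le
          have d2 : Metric.diam (K' : Set X) ≤ Metric.diam (Metric.thickening η K) :=
            Metric.diam_mono hK' (bdd_all _)
          have d3 : Metric.diam (Metric.thickening η K) ≤ Metric.diam K + 2 * η :=
            Metric.diam_thickening_le _ hηpos.le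
          rw [hKdiam] at d3
          linarith
        have hadm : Adm E ε (bump (K' : Set X) η) [(1, A)] := by
          constructor
          · rintro q hq
            rcases List.mem_cons.mp hq with rfl | h
            · refine ⟨zero_le_one, ?_⟩
              have h5 : t + 4 * η < ε / 6 := by
                rw [hη₀def] at hηle
                linarith [hdiamE']
              exact lt_of_le_of_lt hdiamA h5
            · simp at h
          · intro x hx
            by_cases hxA : x ∈ A
            · have h6 : covS [((1:ℝ), A)] x = 1 := by
                simp [covS, Set.indicator_of_mem hxA]
              rw [h6]
              exact bump_le_one hηpos x
            · have h6 : covS [((1:ℝ), A)] x = 0 := by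
                simp [covS, Set.indicator_of_notMem hxA]
              rw [h6]
              apply le_of_eq
              apply bump_eq_zero hηpos
              intro hlt
              exact hxA ((Metric.mem_thickening_iff_infDist_lt hKne').mpr hlt)
        have h3 : lam (K' : Set X) ≤ (t + 4 * η) ^ τ := by
          refine le_trans (hlamle _ (bump (K' : Set X) η) (bump_nonneg _ _)
            (fun y hy => le_of_eq (bump_eq_one_of_mem _ _ hy).symm)) ?_
          refine le_trans (hℓle _) ?_
          refine le_trans (pF_le hadm) ?_
          have h7 : costS τ [((1:ℝ), A)] = Metric.diam A ^ τ := by simp [costS]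
          rw [h7]
          exact Real.rpow_le_rpow Metric.diam_nonneg hdiamA hτ.le
        calc ((lam (K' : Set X)).toNNReal : ℝ≥0∞) ≤ (((t + 4 * η) ^ τ).toNNReal : ℝ≥0∞) := by
              exact_mod_cast Real.toNNReal_mono h3
          _ = ENNReal.ofReal ((t + 4 * η) ^ τ) := rfl
    have hlim : Filter.Tendsto (fun η : ℝ => ENNReal.ofReal ((t + 4 * η) ^ τ))
        (nhdsWithin 0 (Set.Ioi 0)) (nhds (ENNReal.ofReal (t ^ τ))) := by
      have h1 : Filter.Tendsto (fun η : ℝ => t + 4 * η) (nhdsWithin 0 (Set.Ioi 0)) (nhds t) := by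
        have h2 : Filter.Tendsto (fun η : ℝ => t + 4 * η) (nhds 0) (nhds (t + 4 * 0)) :=
          ((continuous_const.add (continuous_const.mul continuous_id)).tendsto 0)
        simpa using h2.mono_left nhdsWithin_le_nhds
      have h2 : ContinuousAt (fun u : ℝ => u ^ τ) t :=
        Real.continuousAt_rpow_const t τ (Or.inr hτ.le)
      exact (ENNReal.continuous_ofReal.continuousAt.tendsto.comp (h2.tendsto.comp h1))
    refine ge_of_tendsto hlim ?_
    filter_upwards [Ioc_mem_nhdsGT_of_mem (Set.left_mem_Ico.mpr hη₀pos)] with η hη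
    exact hstep η hη.1 hη.2
  set V := μ₀ univ with hV
  have hV0 : V ≠ 0 := by
    intro h
    rw [h] at hμuniv1
    simp at hμuniv1
  refine ⟨V⁻¹ • μ₀, ⟨?_⟩, ?_, ?_⟩
  · rw [Measure.smul_apply, smul_eq_mul, ← hV, ENNReal.inv_mul_cancel hV0 hμuniv_netop]
  · rw [Measure.smul_apply, hμEc, smul_eq_mul, mul_zero]
  · intro E' hsub hdiam
    rcases Set.eq_empty_or_nonempty E' with rfl | hne'
    · rw [measure_empty]
      exact zero_le
    · rw [Measure.smul_apply, smul_eq_mul]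
      calc V⁻¹ * μ₀ E' ≤ V⁻¹ * ENNReal.ofReal (Metric.diam E' ^ τ) :=
            mul_le_mul_right (hmain E' hsub hne' hdiam) _
        _ ≤ 1 * ENNReal.ofReal (Metric.diam E' ^ τ) :=
            mul_le_mul_left (ENNReal.inv_le_one.mpr hμuniv1) _
        _ = ENNReal.ofReal (Metric.diam E' ^ τ) := one_mul _


end ContentMeasure

section Assembly

variable {X : Type} [MetricSpace X] [CompactSpace X]

/-- integer multiset associated to a weighted family -/
noncomputable def msetOf (N : ℕ) (L : List (ℝ × Set X)) : Multiset (Set X) :=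
  (L.map fun q => Multiset.replicate ⌈(N : ℝ) * q.1⌉₊ q.2).sum

lemma msetOf_nil (N : ℕ) : msetOf (X := X) N [] = 0 := rfl

lemma msetOf_cons (N : ℕ) (q : ℝ × Set X) (L : List (ℝ × Set X)) :
    msetOf N (q :: L) = Multiset.replicate ⌈(N : ℝ) * q.1⌉₊ q.2 + msetOf N L := by
  simp [msetOf]

lemma mem_msetOf {N : ℕ} {L : List (ℝ × Set X)} {A : Set X} (h : A ∈ msetOf N L) :
    ∃ q ∈ L, A = q.2 := by
  induction L with
  | nil => simp [msetOf_nil] at h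
  | cons q L ih =>
    rw [msetOf_cons] at h
    rcases Multiset.mem_add.mp h with h | h
    · exact ⟨q, List.mem_cons_self, Multiset.eq_of_mem_replicate h⟩
    · obtain ⟨q', hq', rfl⟩ := ih h
      exact ⟨q', List.mem_cons_of_mem _ hq', rfl⟩

open scoped Classical in
lemma countP_replicate (n : ℕ) (A : Set X) (x : X) :
    (Multiset.replicate n A).countP (x ∈ ·) = if x ∈ A then n else 0 := by
  induction n with
  | zero => simp
  | succ m ih =>
    rw [Multiset.replicate_succ, Multiset.countP_cons, ih]
    by_cases h : x ∈ A <;> simp [h]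

open scoped Classical in
lemma countP_msetOf (N : ℕ) (L : List (ℝ × Set X)) (hw : ∀ q ∈ L, 0 ≤ q.1) (x : X) :
    (N : ℝ) * covS L x ≤ ((msetOf N L).countP (x ∈ ·) : ℝ) := by
  induction L with
  | nil => simp [msetOf_nil, covS]
  | cons q L ih =>
    rw [msetOf_cons, Multiset.countP_add]
    have hcov : covS (q :: L) x
        = q.1 * Set.indicator q.2 (fun _ => (1:ℝ)) x + covS L x := by
      simp [covS]
    rw [hcov, countP_replicate]
    have hih := ih (fun q' hq' => hw q' (List.mem_cons_of_mem _ hq'))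
    by_cases hx : x ∈ q.2
    · rw [if_pos hx, Set.indicator_of_mem hx]
      push_cast
      have h1 : (N : ℝ) * q.1 ≤ ⌈(N : ℝ) * q.1⌉₊ := Nat.le_ceil _
      nlinarith [hih]
    · rw [if_neg hx, Set.indicator_of_notMem hx]
      push_cast
      nlinarith [hih]

lemma map_sum_msetOf (N : ℕ) (L : List (ℝ × Set X)) (F : Set X → ℝ≥0∞) :
    ((msetOf N L).map F).sum
      = (L.map fun q => (⌈(N : ℝ) * q.1⌉₊ : ℝ≥0∞) * F q.2).sum := by
  induction L with
  | nil => simp [msetOf_nil]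
  | cons q L ih =>
    rw [msetOf_cons, Multiset.map_add, Multiset.sum_add, ih, List.map_cons, List.sum_cons]
    congr 1
    rw [Multiset.map_replicate, Multiset.sum_replicate, nsmul_eq_mul]

lemma list_ofReal_sum {α : Type*} (g : α → ℝ) :
    ∀ (l : List α), (∀ a ∈ l, 0 ≤ g a) →
      (l.map fun a => ENNReal.ofReal (g a)).sum = ENNReal.ofReal ((l.map g).sum) := by
  intro l
  induction l with
  | nil => simp
  | cons a t ih =>
    intro h
    rw [List.map_cons, List.sum_cons, List.map_cons, List.sum_cons,
      ih (fun b hb => h b (List.mem_cons_of_mem _ hb)),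
      ENNReal.ofReal_add (h a List.mem_cons_self)]
    exact List.sum_nonneg (by
      rintro v hv
      obtain ⟨b, hb, rfl⟩ := List.mem_map.mp hv
      exact h b (List.mem_cons_of_mem _ hb))

lemma cost_alg (N : ℕ) (τ : ℝ) (L : List (ℝ × Set X)) :
    (L.map fun q => ((N : ℝ) * q.1 + 1) * ((5:ℝ) ^ τ * Metric.diam q.2 ^ τ)).sum
      = (5:ℝ) ^ τ * ((N : ℝ) * costS τ L + (L.map fun q => Metric.diam q.2 ^ τ).sum) := by
  induction L with
  | nil => simp [costS]
  | cons q L ih =>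
    have hcost : costS τ (q :: L) = q.1 * Metric.diam q.2 ^ τ + costS τ L := by simp [costS]
    rw [List.map_cons, List.sum_cons, ih, hcost, List.map_cons, List.sum_cons]
    ring

open scoped Classical in
lemma key_hbig {E : Set X} (hne : E.Nonempty) {ε ε₀ τ s' : ℝ}
    (hτ : 0 < τ) (hε : 0 < ε) (hτs' : τ ≤ s')
    (hε₀ : 0 < ε₀) (hεε₀ : ε ≤ ε₀)
    (hgap : (5:ℝ) ^ τ ≤ ε₀ ^ (τ - s'))
    (hMs' : 1 ≤ hMeasure E s' ε) :
    ∀ L : List (ℝ × Set X), Adm E ε 1 L → 1 ≤ costS τ L := by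
  intro L hL
  by_contra hcon
  push_neg at hcon
  set W := costS τ L with hW
  set W1 := (L.map fun q => Metric.diam q.2 ^ τ).sum with hW1
  have hW1nn : 0 ≤ W1 := by
    apply List.sum_nonneg
    rintro v hv
    obtain ⟨q, hq, rfl⟩ := List.mem_map.mp hv
    exact Real.rpow_nonneg Metric.diam_nonneg _
  have hWnn : 0 ≤ W := costS_nonneg (fun q hq => (hL.1 q hq).1)
  set N : ℕ := ⌊W1 / (1 - W)⌋₊ + 1 with hN
  have hNW : (N : ℝ) * W + W1 < N := by
    have h2 : 0 < 1 - W := by linarith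
    have h1 : W1 / (1 - W) < (N : ℝ) := by
      rw [hN]
      push_cast
      exact Nat.lt_floor_add_one _
    have h3 : W1 < (N : ℝ) * (1 - W) := by
      calc W1 = W1 / (1 - W) * (1 - W) := by field_simp
        _ < (N : ℝ) * (1 - W) := by
            exact mul_lt_mul_of_pos_right h1 h2
    nlinarith
  set ℳ := msetOf N L with hℳ
  have hdiamℳ : ∀ A ∈ ℳ, Metric.diam A < ε / 6 := by
    intro A hA
    obtain ⟨q, hq, rfl⟩ := mem_msetOf hA
    exact (hL.1 q hq).2
  have hcovℳ : ∀ x ∈ E, N ≤ ℳ.countP (x ∈ ·) := by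
    intro x hx
    have h1 : (1 : ℝ) ≤ covS L x := by simpa using hL.2 x hx
    have h2 := countP_msetOf N L (fun q hq => (hL.1 q hq).1) x
    have h3 : (N : ℝ) ≤ (ℳ.countP (x ∈ ·) : ℝ) := by nlinarith
    exact_mod_cast h3
  have hthm := thmW hτ.le hε N ℳ hdiamℳ hcovℳ
  -- upper bound for the sum
  have hub : ((ℳ.map fun A => ENNReal.ofReal ((5 * Metric.diam A) ^ τ)).sum)
      ≤ ENNReal.ofReal ((5:ℝ) ^ τ * ((N : ℝ) * W + W1)) := by
    rw [hℳ, map_sum_msetOf]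
    have hle : ∀ q ∈ L, (⌈(N : ℝ) * q.1⌉₊ : ℝ≥0∞) * ENNReal.ofReal ((5 * Metric.diam q.2) ^ τ)
        ≤ ENNReal.ofReal (((N : ℝ) * q.1 + 1) * ((5:ℝ) ^ τ * Metric.diam q.2 ^ τ)) := by
      intro q hq
      have hq1 : 0 ≤ q.1 := (hL.1 q hq).1
      have hceil : (⌈(N : ℝ) * q.1⌉₊ : ℝ) ≤ (N : ℝ) * q.1 + 1 :=
        le_of_lt (Nat.ceil_lt_add_one (by positivity))
      have hsplit : (5 * Metric.diam q.2) ^ τ = (5:ℝ) ^ τ * Metric.diam q.2 ^ τ :=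
        Real.mul_rpow (by norm_num) Metric.diam_nonneg
      calc (⌈(N : ℝ) * q.1⌉₊ : ℝ≥0∞) * ENNReal.ofReal ((5 * Metric.diam q.2) ^ τ)
          = ENNReal.ofReal (⌈(N : ℝ) * q.1⌉₊ : ℝ) * ENNReal.ofReal ((5 * Metric.diam q.2) ^ τ) := by
            rw [ENNReal.ofReal_natCast]
        _ = ENNReal.ofReal ((⌈(N : ℝ) * q.1⌉₊ : ℝ) * ((5 * Metric.diam q.2) ^ τ)) := by
            rw [ENNReal.ofReal_mul (by positivity)]
        _ ≤ ENNReal.ofReal (((N : ℝ) * q.1 + 1) * ((5:ℝ) ^ τ * Metric.diam q.2 ^ τ)) := by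
            apply ENNReal.ofReal_le_ofReal
            rw [hsplit]
            apply mul_le_mul_of_nonneg_right hceil
            positivity
    calc (L.map fun q => (⌈(N : ℝ) * q.1⌉₊ : ℝ≥0∞)
            * ENNReal.ofReal ((5 * Metric.diam q.2) ^ τ)).sum
        ≤ (L.map fun q =>
            ENNReal.ofReal (((N : ℝ) * q.1 + 1) * ((5:ℝ) ^ τ * Metric.diam q.2 ^ τ))).sum :=
          List.sum_le_sum hle
      _ = ENNReal.ofReal ((L.map fun q =>
            ((N : ℝ) * q.1 + 1) * ((5:ℝ) ^ τ * Metric.diam q.2 ^ τ)).sum) := by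
          apply list_ofReal_sum
          intro q hq
          have hq1 : 0 ≤ q.1 := (hL.1 q hq).1
          positivity
      _ = ENNReal.ofReal ((5:ℝ) ^ τ * ((N : ℝ) * W + W1)) := by
          rw [cost_alg]
  -- lower bound
  have hlb : ENNReal.ofReal ((5:ℝ) ^ τ) ≤ hMeasure E τ ε := by
    calc ENNReal.ofReal ((5:ℝ) ^ τ) ≤ ENNReal.ofReal (ε₀ ^ (τ - s')) :=
          ENNReal.ofReal_le_ofReal hgap
      _ = ENNReal.ofReal (ε₀ ^ (τ - s')) * 1 := (mul_one _).symm
      _ ≤ ENNReal.ofReal (ε₀ ^ (τ - s')) * hMeasure E s' ε := mul_le_mul_right hMs' _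
      _ ≤ hMeasure E τ ε := hMeasure_exp_compare hτ hτs' hε₀ hεε₀
  have hNpos : 0 < (N : ℝ) := by positivity
  have hfinal : (N : ℝ≥0∞) * ENNReal.ofReal ((5:ℝ) ^ τ)
      < (N : ℝ≥0∞) * ENNReal.ofReal ((5:ℝ) ^ τ) := by
    calc (N : ℝ≥0∞) * ENNReal.ofReal ((5:ℝ) ^ τ)
        ≤ (N : ℝ≥0∞) * hMeasure E τ ε := mul_le_mul_right hlb _
      _ ≤ (ℳ.map fun A => ENNReal.ofReal ((5 * Metric.diam A) ^ τ)).sum := hthm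
      _ ≤ ENNReal.ofReal ((5:ℝ) ^ τ * ((N : ℝ) * W + W1)) := hub
      _ < ENNReal.ofReal ((5:ℝ) ^ τ * (N : ℝ)) := by
          rw [ENNReal.ofReal_lt_ofReal_iff (by positivity)]
          apply mul_lt_mul_of_pos_left hNW (Real.rpow_pos_of_pos (by norm_num) _)
      _ = (N : ℝ≥0∞) * ENNReal.ofReal ((5:ℝ) ^ τ) := by
          rw [ENNReal.ofReal_mul (Real.rpow_nonneg (by norm_num) _), ENNReal.ofReal_natCast,
            mul_comm]
  exact lt_irrefl _ hfinal

end Assembly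

/-- Frostman-type lemma (Lindenstrauss–Tsukamoto): for `c ∈ (0,1)` there
is `ε₀ ∈ (0,1)`, depending only on `c`, such that for every compact metric space,
every nonempty compact subset `E` and every `0 < ε ≤ ε₀` there is a Borel probability
measure supported on `E` with `μ(E') ≤ (diam E')^{c·dim_H(E,d,ε)}` whenever
`diam E' < ε/6`. -/
theorem exists_frostman_measure (c : ℝ) (hc : c ∈ Set.Ioo (0 : ℝ) 1) :
    ∃ ε₀ ∈ Set.Ioo (0 : ℝ) 1,
      ∀ (X : Type) [MetricSpace X] [CompactSpace X] [MeasurableSpace X] [BorelSpace X],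
        ∀ E : Set X, IsCompact E → E.Nonempty → ∀ ε : ℝ, 0 < ε → ε ≤ ε₀ →
          ∃ μ : MeasureTheory.Measure X, MeasureTheory.IsProbabilityMeasure μ ∧ μ Eᶜ = 0 ∧
            ∀ E' : Set X, E' ⊆ E → Metric.diam E' < ε / 6 →
              μ E' ≤ ENNReal.ofReal (Metric.diam E' ^ (c * (dimHScale E ε).toReal)) := by
  obtain ⟨hc0, hc1⟩ := hc
  have hc1' : (0:ℝ) < 1 - c := by linarith
  set Lc : ℝ := 2 * c / (1 - c) with hLc
  have hLpos : 0 < Lc := by positivity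
  refine ⟨(5:ℝ) ^ (-Lc), ⟨Real.rpow_pos_of_pos (by norm_num) _,
    Real.rpow_lt_one_of_one_lt_of_neg (by norm_num) (by linarith)⟩, ?_⟩
  intro X _ _ _ _ E hE hne ε hεpos hεle
  set σ := (dimHScale E ε).toReal with hσ
  have hσnn : 0 ≤ σ := ENNReal.toReal_nonneg
  rcases eq_or_lt_of_le hσnn with hσ0 | hσpos
  · -- degenerate case: the exponent is zero, a Dirac measure works
    obtain ⟨x₀, hx₀⟩ := hne
    refine ⟨MeasureTheory.Measure.dirac x₀, inferInstance, ?_, ?_⟩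
    · rw [MeasureTheory.Measure.dirac_apply' _ hE.isClosed.measurableSet.compl]
      exact Set.indicator_of_notMem (by simpa using hx₀) _
    · intro E' hsub hdiam
      have hexp : c * σ = 0 := by rw [← hσ0, mul_zero]
      rw [hexp, Real.rpow_zero]
      simpa using MeasureTheory.prob_le_one (μ := MeasureTheory.Measure.dirac x₀) (s := E')
  · -- main case
    have hfin : dimHScale E ε ≠ ⊤ := by
      intro h
      have h0 : σ = 0 := by rw [hσ, h, ENNReal.toReal_top]
      rw [h0] at hσpos
      exact lt_irrefl _ hσpos
    have hlt : ENNReal.ofReal ((1 + c) / 2 * σ) < dimHScale E ε := by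
      conv_rhs => rw [← ENNReal.ofReal_toReal hfin]
      rw [ENNReal.ofReal_lt_ofReal_iff (by rw [← hσ]; exact hσpos)]
      rw [← hσ]
      nlinarith
    rw [dimHScale] at hlt
    obtain ⟨s', hs'⟩ := lt_iSup_iff.mp hlt
    by_cases h0s' : 0 ≤ s'
    swap
    · rw [iSup_neg h0s'] at hs'
      exact absurd hs' (by simp)
    rw [iSup_pos h0s'] at hs'
    by_cases h1M : 1 ≤ hMeasure E s' ε
    swap
    · rw [iSup_neg h1M] at hs'
      exact absurd hs' (by simp)
    rw [iSup_pos h1M] at hs'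
    have hs'gt : (1 + c) / 2 * σ < s' :=
      (ENNReal.ofReal_lt_ofReal_iff_of_nonneg (by positivity)).mp hs'
    set τ := c * σ with hτdef
    have hτpos : 0 < τ := by rw [hτdef]; positivity
    have hτs' : τ ≤ s' := by rw [hτdef]; nlinarith
    have hgap : (5:ℝ) ^ τ ≤ ((5:ℝ) ^ (-Lc)) ^ (τ - s') := by
      rw [← Real.rpow_mul (by norm_num : (0:ℝ) ≤ 5)]
      apply Real.rpow_le_rpow_of_exponent_le (by norm_num : (1:ℝ) ≤ 5)
      have h1 : (1 - c) / 2 * σ ≤ s' - τ := by rw [hτdef]; nlinarith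
      have h2 : Lc * ((1 - c) / 2 * σ) = τ := by
        rw [hLc, hτdef]
        field_simp
      calc τ = Lc * ((1 - c) / 2 * σ) := h2.symm
        _ ≤ Lc * (s' - τ) := mul_le_mul_of_nonneg_left h1 hLpos.le
        _ = -Lc * (τ - s') := by ring
    have hbig := key_hbig hne hτpos hεpos hτs'
      (Real.rpow_pos_of_pos (by norm_num) _) hεle hgap h1M
    obtain ⟨μ, h1, h2, h3⟩ := exists_measure_main E hE hne hτpos hεpos hbig
    exact ⟨μ, h1, h2, h3⟩

end MeanDim8
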